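/- Let μ, ν, λ be probability measures on ℝ with Cauchy transforms G_μ, G_ν, G_λ and reciprocal Cauchy transforms H = 1/G. Suppose λ is given by the disintegration formula λ(·) = ∫_ℝ ν_y(·) dμ(y), where for each y ∈ ℝ, ν_y is a probability measure with H_{ν_y}(z) = H_ν(z) − y on ℂ⁺. Then H_λ(z) = H_μ(H_ν(z)) for all z ∈ ℂ⁺, i.e., λ is the monotone convolution μ ▷ ν. -/

import Mathlib

open MeasureTheory

lemma cauchy_integrable (ρ : Measure ℝ) [IsFiniteMeasure ρ] (z : ℂ) (hz : 0 < z.im) :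
    Integrable (fun x : ℝ => (z - (x : ℂ))⁻¹) ρ := by
  have hmeas : Measurable (fun x : ℝ => (z - (x : ℂ))⁻¹) :=
    (measurable_const.sub Complex.measurable_ofReal).inv
  refine Integrable.mono' (integrable_const (z.im⁻¹)) hmeas.aestronglyMeasurable ?_
  filter_upwards with x
  have h1 : z.im ≤ ‖z - (x:ℂ)‖ := by
    calc z.im = |(z - (x:ℂ)).im| := by simp [abs_of_pos hz]
    _ ≤ ‖z - (x:ℂ)‖ := Complex.abs_im_le_norm _
  rw [norm_inv]
  exact inv_anti₀ hz h1

lemma cauchy_im_neg (ρ : Measure ℝ) [IsProbabilityMeasure ρ] (z : ℂ) (hz : 0 < z.im) :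
    (∫ x : ℝ, (z - (x : ℂ))⁻¹ ∂ρ).im < 0 := by
  have hint := cauchy_integrable ρ z hz
  have him : (∫ x : ℝ, (z - (x : ℂ))⁻¹ ∂ρ).im = ∫ x : ℝ, ((z - (x : ℂ))⁻¹).im ∂ρ :=
    (Complex.imCLM.integral_comp_comm hint).symm
  rw [him]
  have hneg : ∀ x : ℝ, ((z - (x : ℂ))⁻¹).im < 0 := by
    intro x
    have him : (z - (x:ℂ)).im = z.im := by simp [Complex.sub_im]
    have hne : z - (x : ℂ) ≠ 0 := by
      intro h
      rw [h] at him; simp at him; linarith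
    rw [Complex.inv_im, him]
    exact div_neg_of_neg_of_pos (by linarith) (Complex.normSq_pos.2 hne)
  have hpos : 0 < ∫ x, -((z - (x : ℂ))⁻¹).im ∂ρ := by
    refine (integral_pos_iff_support_of_nonneg_ae
      (Filter.Eventually.of_forall fun x => by have := hneg x; dsimp only [Pi.zero_apply]; linarith)
      ?_).2 ?_
    · exact hint.im.neg
    have hsup : Function.support (fun x : ℝ => -((z - (x : ℂ))⁻¹).im) = Set.univ := by
      ext x; simp only [Function.mem_support, Set.mem_univ, iff_true]
      have := hneg x; intro h; rw [neg_eq_zero] at h; linarith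
    rw [hsup]; simp
  rw [integral_neg] at hpos
  linarith

lemma cauchy_ne_zero (ρ : Measure ℝ) [IsProbabilityMeasure ρ] (z : ℂ) (hz : 0 < z.im) :
    (∫ x : ℝ, (z - (x : ℂ))⁻¹ ∂ρ) ≠ 0 := by
  intro h
  have := cauchy_im_neg ρ z hz
  rw [h] at this; simp at this

/-- If `λ = ∫ ν_y dμ(y)` where each `ν_y` has reciprocal Cauchy transform
`H_ν(z) − y`, then `H_λ = H_μ ∘ H_ν` on the upper half plane, i.e. `λ = μ ▷ ν`. -/
theorem monotoneConvolution_reciprocalCauchy_comp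
    (μ ν lam : Measure ℝ)
    [IsProbabilityMeasure μ] [IsProbabilityMeasure ν] [IsProbabilityMeasure lam]
    (νy : ℝ → Measure ℝ) (hνyProb : ∀ y, IsProbabilityMeasure (νy y))
    (hνyMeas : Measurable νy)
    (hνy : ∀ (y : ℝ) (z : ℂ), 0 < z.im →
      (∫ x : ℝ, (z - (x : ℂ))⁻¹ ∂(νy y))⁻¹
        = (∫ x : ℝ, (z - (x : ℂ))⁻¹ ∂ν)⁻¹ - (y : ℂ))
    (hlam : ∀ s : Set ℝ, MeasurableSet s → lam s = ∫⁻ y, νy y s ∂μ) :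
    ∀ z : ℂ, 0 < z.im →
      (∫ x : ℝ, (z - (x : ℂ))⁻¹ ∂lam)⁻¹
        = (∫ x : ℝ, ((∫ u : ℝ, (z - (u : ℂ))⁻¹ ∂ν)⁻¹ - (x : ℂ))⁻¹ ∂μ)⁻¹ := by
  intro z hz
  set κ : ProbabilityTheory.Kernel ℝ ℝ := ⟨νy, hνyMeas⟩ with hκ
  have hκap : ∀ y, κ y = νy y := fun y => rfl
  haveI : ProbabilityTheory.IsMarkovKernel κ :=
    ⟨fun y => by rw [hκap]; exact hνyProb y⟩
  have hlameq : lam = (μ.compProd κ).snd := by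
    ext s hs
    rw [Measure.snd_apply hs, Measure.compProd_apply (measurable_snd hs), hlam s hs]
    rfl
  have key : (∫ x : ℝ, (z - (x : ℂ))⁻¹ ∂lam)
      = ∫ x : ℝ, ((∫ u : ℝ, (z - (u : ℂ))⁻¹ ∂ν)⁻¹ - (x : ℂ))⁻¹ ∂μ := by
    have hmeas : Measurable (fun x : ℝ => (z - (x : ℂ))⁻¹) :=
      (measurable_const.sub Complex.measurable_ofReal).inv
    rw [hlameq, Measure.snd, integral_map measurable_snd.aemeasurable
      hmeas.aestronglyMeasurable]
    have hint : Integrable (fun p : ℝ × ℝ => (z - (p.2 : ℂ))⁻¹) (μ.compProd κ) := by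
      haveI : IsProbabilityMeasure (μ.compProd κ) := by infer_instance
      refine Integrable.mono' (integrable_const (z.im⁻¹))
        ((measurable_const.sub Complex.measurable_ofReal).inv.comp measurable_snd).aestronglyMeasurable ?_
      filter_upwards with p
      have h1 : z.im ≤ ‖z - (p.2:ℂ)‖ := by
        calc z.im = |(z - (p.2:ℂ)).im| := by simp [abs_of_pos hz]
        _ ≤ ‖z - (p.2:ℂ)‖ := Complex.abs_im_le_norm _
      rw [norm_inv]
      exact inv_anti₀ hz h1
    rw [Measure.integral_compProd hint]
    refine integral_congr_ae (Filter.Eventually.of_forall fun y => ?_)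
    haveI := hνyProb y
    have h1 : (∫ x : ℝ, (z - (x : ℂ))⁻¹ ∂(νy y))
        = ((∫ x : ℝ, (z - (x : ℂ))⁻¹ ∂ν)⁻¹ - (y : ℂ))⁻¹ := by
      rw [← hνy y z hz, inv_inv]
    show (∫ x : ℝ, (z - (x : ℂ))⁻¹ ∂(νy y)) = _
    exact h1
  rw [key]
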